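/- For α ≠ 0, the divergence D(x|y) = (1/α)·[(x^α·ln x − x^α/α) + y^α/α − x^α·ln y] on positive reals is nonnegative, with equality if and only if x = y. -/
import Mathlib

lemma kl_scalar (a b : ℝ) (ha : 0 < a) (hb : 0 < b) :
    0 ≤ a * Real.log a - a * Real.log b - a + b ∧
    (a * Real.log a - a * Real.log b - a + b = 0 ↔ a = b) := by
  have h := Real.log_le_sub_one_of_pos (show 0 < b / a from div_pos hb ha)
  rw [Real.log_div hb.ne' ha.ne'] at h
  have hc : a * (b / a) = b := by field_simp
  have h' := mul_le_mul_of_nonneg_left h ha.le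
  refine ⟨by nlinarith, ?_, by intro h; subst h; ring⟩
  intro h0
  by_contra hne
  have hne' : b / a ≠ 1 := by
    intro h1
    exact hne ((div_eq_one_iff_eq ha.ne').1 h1).symm
  have h2 := Real.log_lt_sub_one_of_pos (div_pos hb ha) hne'
  rw [Real.log_div hb.ne' ha.ne'] at h2
  have h2' := mul_lt_mul_of_pos_left h2 ha
  nlinarith

/-- The scalar `(α,0)`-divergence
`D(x|y) = (1/α) [(x^α ln x − x^α/α) + y^α/α − x^α ln y]`
is nonnegative on `(0,∞)²`, vanishing exactly on the diagonal. -/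
theorem a0_divergence_nonneg (α : ℝ) (hα : α ≠ 0) :
    ∀ x ∈ Set.Ioi (0:ℝ), ∀ y ∈ Set.Ioi (0:ℝ),
      0 ≤ (1 / α) * ((x ^ α * Real.log x - x ^ α / α) + y ^ α / α - x ^ α * Real.log y) ∧
      ((1 / α) * ((x ^ α * Real.log x - x ^ α / α) + y ^ α / α - x ^ α * Real.log y) = 0 ↔
        x = y) := by
  intro x hx y hy
  have hx0 : (0:ℝ) < x := hx
  have hy0 : (0:ℝ) < y := hy
  set a := x ^ α with ha
  set b := y ^ α with hb
  have ha0 : 0 < a := Real.rpow_pos_of_pos hx0 α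
  have hb0 : 0 < b := Real.rpow_pos_of_pos hy0 α
  have hla : Real.log a = α * Real.log x := Real.log_rpow hx0 α
  have hlb : Real.log b = α * Real.log y := Real.log_rpow hy0 α
  have key : (1 / α) * ((a * Real.log x - a / α) + b / α - a * Real.log y)
      = (1 / (α * α)) * (a * Real.log a - a * Real.log b - a + b) := by
    rw [hla, hlb]; field_simp; ring
  obtain ⟨h1, h2⟩ := kl_scalar a b ha0 hb0
  rw [key]
  have hpos : 0 < 1 / (α * α) := one_div_pos.2 (mul_self_pos.2 hα)
  refine ⟨mul_nonneg hpos.le h1, ?_⟩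
  rw [mul_eq_zero, or_iff_right hpos.ne', h2]
  constructor
  · intro hab
    have := congrArg Real.log hab
    rw [hla, hlb] at this
    have hlog : Real.log x = Real.log y := mul_left_cancel₀ hα this
    exact Real.log_injOn_pos (Set.mem_Ioi.2 hx0) (Set.mem_Ioi.2 hy0) hlog
  · intro h; rw [ha, hb, h]
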